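/- Let d, m ∈ ℕ, let 0 < ε_d ≤ 0.5, 0 < ε ≤ 0.5 and 0 < δ ≤ 0.5. Let S = {(x_1,y_1),…,(x_m,y_m)} ⊆ ℝ^d × {−1,1} satisfy Assumption(ψ, φ) with ψ ≤ 0.1 and φ ≤ ε_d/(4m). If w ∈ ℝ^d is an (ε, δ)-approximate KKT point of the margin-maximization problem w.r.t. S with multipliers λ_1,…,λ_m, then for every t ∈ [m]: (1 − 0.6·ε_d − 1.1·ε)/‖x_t‖² ≤ λ_t ≤ (1 + 1.2·ε_d + 2.15·ε + 2.2·δ)/‖x_t‖². -/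

import Mathlib

open Finset

set_option maxHeartbeats 2000000 in
/-- Two-sided bounds on every KKT multiplier of a linear approximate KKT
point on a nearly-orthogonal dataset:
`(1 - 0.6 εd - 1.1 ε)/‖x_t‖² ≤ λ_t ≤ (1 + 1.2 εd + 2.15 ε + 2.2 δ)/‖x_t‖²`. -/
theorem stmt_12
    (d m : ℕ)
    (ε δ εd ψ φ : ℝ)
    (hεdpos : 0 < εd) (hεdle : εd ≤ 0.5)
    (hεpos : 0 < ε) (hεle : ε ≤ 0.5)
    (hδpos : 0 < δ) (hδle : δ ≤ 0.5)
    (hψ : ψ ≤ 0.1) (hφ : φ ≤ εd / (4 * m))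
    (x : Fin m → EuclideanSpace ℝ (Fin d)) (y : Fin m → ℝ)
    (hy : ∀ i, y i = 1 ∨ y i = -1)
    (hnorm : ∀ i, 1 - ψ ≤ ‖x i‖ ^ 2 ∧ ‖x i‖ ^ 2 ≤ 1 + ψ)
    (hortho : ∀ i j, i ≠ j → |(inner ℝ (x i) (x j) : ℝ)| ≤ φ)
    (w : EuclideanSpace ℝ (Fin d)) (lam : Fin m → ℝ)
    (hlam : ∀ i, 0 ≤ lam i)
    (hstat : ‖w - ∑ i, (lam i * y i) • x i‖ ≤ ε)
    (hcs : ∀ i, lam i * (y i * (inner ℝ w (x i) : ℝ) - 1) ≤ δ)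
    (hpf : ∀ i, 1 ≤ y i * (inner ℝ w (x i) : ℝ)) :
    ∀ t, (1 - 0.6 * εd - 1.1 * ε) / ‖x t‖ ^ 2 ≤ lam t ∧
      lam t ≤ (1 + 1.2 * εd + 2.15 * ε + 2.2 * δ) / ‖x t‖ ^ 2 := by
  intro t
  have hm0 : 0 < m := t.pos
  have hm1 : (1:ℝ) ≤ (m:ℝ) := by exact_mod_cast hm0
  have hmR : (0:ℝ) < (m:ℝ) := by linarith
  have hyabs : ∀ i, |y i| = 1 := by
    intro i; rcases hy i with h | h <;> simp [h]
  have hy2 : ∀ i, y i * y i = 1 := by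
    intro i; rcases hy i with h | h <;> simp [h]
  have hN9 : ∀ i, (0.9:ℝ) ≤ ‖x i‖ ^ 2 := fun i => by
    have := (hnorm i).1; linarith
  have hN11 : ∀ i, ‖x i‖ ^ 2 ≤ (1.1:ℝ) := fun i => by
    have := (hnorm i).2; linarith
  have hxn : ∀ i, ‖x i‖ ≤ 1.05 := fun i => by
    nlinarith [hN11 i, norm_nonneg (x i)]
  have hNpos : (0:ℝ) < ‖x t‖ ^ 2 := by linarith [hN9 t]
  have hφ'pos : (0:ℝ) < εd / (4 * m) := by positivity
  have hxij : ∀ i j, i ≠ j → |(inner ℝ (x i) (x j) : ℝ)| ≤ εd / (4 * m) :=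
    fun i j h => le_trans (hortho i j h) hφ
  set v : EuclideanSpace ℝ (Fin d) := ∑ i, (lam i * y i) • x i with hvdef
  set Λ : ℝ := ∑ i, lam i with hΛdef
  set Q : ℝ := ∑ i, (lam i)^2 with hQdef
  have hΛ0 : 0 ≤ Λ := Finset.sum_nonneg fun i _ => hlam i
  have hwv : ‖w - v‖ ≤ ε := hstat
  -- expansion of inner ℝ products with v
  have hvin : ∀ z : EuclideanSpace ℝ (Fin d),
      (inner ℝ z v : ℝ) = ∑ j, lam j * y j * (inner ℝ z (x j) : ℝ) := by
    intro z
    rw [hvdef, inner_sum]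
    exact Finset.sum_congr rfl fun j _ => real_inner_smul_right z (x j) (lam j * y j)
  have hvin' : ∀ z : EuclideanSpace ℝ (Fin d),
      (inner ℝ v z : ℝ) = ∑ j, lam j * y j * (inner ℝ (x j) z : ℝ) := by
    intro z
    rw [hvdef, sum_inner]
    exact Finset.sum_congr rfl fun j _ => real_inner_smul_left (x j) z (lam j * y j)
  have herase : ∀ i : Fin m, ∑ j ∈ Finset.univ.erase i, lam j ≤ Λ := by
    intro i
    apply Finset.sum_le_sum_of_subset_of_nonneg (Finset.erase_subset _ _)
    intro j _ _; exact hlam j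
  have hcross : ∀ i : Fin m,
      |∑ j ∈ Finset.univ.erase i, lam j * y j * (inner ℝ (x i) (x j) : ℝ)| ≤ εd / (4*m) * Λ := by
    intro i
    calc |∑ j ∈ Finset.univ.erase i, lam j * y j * (inner ℝ (x i) (x j) : ℝ)|
        ≤ ∑ j ∈ Finset.univ.erase i, |lam j * y j * (inner ℝ (x i) (x j) : ℝ)| :=
          Finset.abs_sum_le_sum_abs _ _
      _ ≤ ∑ j ∈ Finset.univ.erase i, lam j * (εd/(4*m)) := by
          apply Finset.sum_le_sum
          intro j hj
          have hji : j ≠ i := Finset.ne_of_mem_erase hj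
          rw [abs_mul, abs_mul, abs_of_nonneg (hlam j), hyabs j, mul_one]
          exact mul_le_mul_of_nonneg_left (hxij i j hji.symm) (hlam j)
      _ = (∑ j ∈ Finset.univ.erase i, lam j) * (εd/(4*m)) := by rw [Finset.sum_mul]
      _ ≤ Λ * (εd/(4*m)) := mul_le_mul_of_nonneg_right (herase i) hφ'pos.le
      _ = εd/(4*m) * Λ := mul_comm _ _
  have hsplit : ∀ i : Fin m, (inner ℝ (x i) v : ℝ)
      = lam i * y i * ‖x i‖^2 + ∑ j ∈ Finset.univ.erase i, lam j * y j * (inner ℝ (x i) (x j) : ℝ) := by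
    intro i
    rw [hvin]
    rw [← Finset.sum_erase_add _ _ (Finset.mem_univ i)]
    rw [real_inner_self_eq_norm_sq]
    ring
  -- key deviation bound at index t
  have hkey : |y t * (inner ℝ w (x t) : ℝ) - lam t * ‖x t‖^2| ≤ 1.05 * ε + εd/(4*m) * Λ := by
    have hsub : (inner ℝ w (x t) : ℝ) = inner ℝ (w - v) (x t) + inner ℝ v (x t) := by
      rw [inner_sub_left]; ring
    have hvt : (inner ℝ v (x t) : ℝ) = lam t * y t * ‖x t‖^2
        + ∑ j ∈ Finset.univ.erase t, lam j * y j * (inner ℝ (x t) (x j) : ℝ) := by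
      rw [real_inner_comm]; exact hsplit t
    have hid : y t * (inner ℝ w (x t):ℝ) - lam t * ‖x t‖^2
        = y t * (inner ℝ (w - v) (x t) : ℝ)
          + y t * ∑ j ∈ Finset.univ.erase t, lam j * y j * (inner ℝ (x t) (x j) : ℝ) := by
      rw [hsub, hvt]
      linear_combination (lam t * ‖x t‖ ^ 2) * hy2 t
    have h1 : |y t * (inner ℝ (w - v) (x t) : ℝ)| ≤ 1.05 * ε := by
      rw [abs_mul, hyabs t, one_mul]
      calc |(inner ℝ (w - v) (x t) : ℝ)| ≤ ‖w - v‖ * ‖x t‖ := abs_real_inner_le_norm _ _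
        _ ≤ ε * 1.05 := mul_le_mul hwv (hxn t) (norm_nonneg _) hεpos.le
        _ = 1.05 * ε := mul_comm _ _
    have h2 : |y t * ∑ j ∈ Finset.univ.erase t, lam j * y j * (inner ℝ (x t) (x j) : ℝ)|
        ≤ εd/(4*m) * Λ := by
      rw [abs_mul, hyabs t, one_mul]; exact hcross t
    calc |y t * (inner ℝ w (x t):ℝ) - lam t * ‖x t‖^2|
        = |y t * (inner ℝ (w - v) (x t) : ℝ)
            + y t * ∑ j ∈ Finset.univ.erase t, lam j * y j * (inner ℝ (x t) (x j) : ℝ)| := by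
          rw [hid]
      _ ≤ _ + _ := abs_add_le _ _
      _ ≤ 1.05 * ε + εd/(4*m) * Λ := add_le_add h1 h2
  -- bound on the sum of multipliers
  have hQc : Λ^2 ≤ (m:ℝ) * Q := by
    have h := sq_sum_le_card_mul_sum_sq (s := (Finset.univ : Finset (Fin m))) (f := lam)
    simpa [hΛdef, hQdef] using h
  have hvw : (inner ℝ v w : ℝ) ≤ Λ + m * δ := by
    rw [hvin' w]
    calc ∑ j, lam j * y j * (inner ℝ (x j) w : ℝ)
        ≤ ∑ j, (lam j + δ) := by
          apply Finset.sum_le_sum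
          intro j _
          have h := hcs j
          have hcomm : (inner ℝ (x j) w : ℝ) = inner ℝ w (x j) := real_inner_comm _ _
          rw [hcomm]; nlinarith [h]
      _ = Λ + m * δ := by
          rw [Finset.sum_add_distrib, Finset.sum_const, Finset.card_univ, Fintype.card_fin,
            nsmul_eq_mul]
  have hnv_ub : ‖v‖^2 ≤ Λ + m*δ + ε*‖v‖ := by
    have h1 : ‖v‖^2 = (inner ℝ v w : ℝ) - inner ℝ v (w - v) := by
      rw [inner_sub_right, real_inner_self_eq_norm_sq]; ring
    have h2 : |(inner ℝ v (w - v) : ℝ)| ≤ ‖v‖ * ε := by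
      calc |(inner ℝ v (w - v) : ℝ)| ≤ ‖v‖ * ‖w - v‖ := abs_real_inner_le_norm _ _
        _ ≤ ‖v‖ * ε := mul_le_mul_of_nonneg_left hwv (norm_nonneg v)
    have h3 := (abs_le.mp h2).1
    nlinarith [hvw]
  have hnv_lb : 0.9 * Q - εd/(4*m) * Λ * Λ ≤ ‖v‖^2 := by
    have h1 : ‖v‖^2 = ∑ i, lam i * y i * (inner ℝ (x i) v : ℝ) := by
      rw [← real_inner_self_eq_norm_sq, hvin' v]
    rw [h1]
    have h2 : ∀ i ∈ (Finset.univ : Finset (Fin m)),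
        0.9 * (lam i)^2 - εd/(4*m) * Λ * lam i ≤ lam i * y i * (inner ℝ (x i) v : ℝ) := by
      intro i _
      have hterm : lam i * y i * (inner ℝ (x i) v : ℝ)
          = (lam i)^2 * ‖x i‖^2
            + lam i * (y i * ∑ j ∈ Finset.univ.erase i, lam j * y j * (inner ℝ (x i) (x j) : ℝ)) := by
        rw [hsplit i]
        linear_combination (lam i * lam i * ‖x i‖^2) * hy2 i
      rw [hterm]
      have habs : |y i * ∑ j ∈ Finset.univ.erase i, lam j * y j * (inner ℝ (x i) (x j) : ℝ)|
          ≤ εd/(4*m) * Λ := by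
        rw [abs_mul, hyabs i, one_mul]; exact hcross i
      have h3 := (abs_le.mp habs).1
      nlinarith [mul_le_mul_of_nonneg_left h3 (hlam i), sq_nonneg (lam i),
        mul_le_mul_of_nonneg_left (hN9 i) (sq_nonneg (lam i))]
    calc 0.9 * Q - εd/(4*m) * Λ * Λ
        = ∑ i, (0.9 * (lam i)^2 - εd/(4*m) * Λ * lam i) := by
          rw [Finset.sum_sub_distrib, ← Finset.mul_sum, ← Finset.mul_sum, hQdef, hΛdef]
      _ ≤ ∑ i, lam i * y i * (inner ℝ (x i) v : ℝ) := Finset.sum_le_sum h2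
  have hmne : (m:ℝ) ≠ 0 := ne_of_gt hmR
  have hcmeq : εd/(4*m) * (m:ℝ) = εd / 4 := by field_simp
  have hcm : εd/(4*m) * (m:ℝ) ≤ 1/8 := by rw [hcmeq]; linarith
  have hΛm : Λ ≤ 2.2 * m := by
    by_contra hco
    push_neg at hco
    have hεv : ε * ‖v‖ ≤ 2.5*ε^2 + 0.1*‖v‖^2 := by nlinarith [sq_nonneg (‖v‖ - 5*ε)]
    have key1 : 0.9 * ‖v‖^2 ≤ Λ + m*δ + 2.5*ε^2 := by linarith [hnv_ub]
    have k1 : 0.9 * ((m:ℝ) * ‖v‖^2) ≤ (m:ℝ)*Λ + (m:ℝ)^2*δ + 2.5*(m:ℝ)*ε^2 := by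
      nlinarith [mul_le_mul_of_nonneg_left key1 hmR.le]
    have k2m : 0.9 * ((m:ℝ) * (0.9 * Q)) - 0.9 * ((m:ℝ) * (εd/(4*m) * Λ * Λ))
        ≤ 0.9 * ((m:ℝ) * ‖v‖^2) := by
      nlinarith [mul_le_mul_of_nonneg_left hnv_lb hmR.le]
    have kc : (m:ℝ) * (εd/(4*m) * Λ * Λ) ≤ (1/8) * Λ^2 := by
      have h := mul_le_mul_of_nonneg_right hcm (sq_nonneg Λ)
      nlinarith [h]
    have k4 : 0.775 * Λ^2 ≤ (m:ℝ) * ‖v‖^2 := by nlinarith [k2m, hQc, kc]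
    have hε2 : ε^2 ≤ 0.25 := by nlinarith
    have hfin : 0.6975 * Λ^2 ≤ (m:ℝ)*Λ + 1.125*(m:ℝ)^2 := by nlinarith [k1, k4]
    nlinarith [hfin, mul_pos (show (0:ℝ) < Λ - 2.2*m by linarith) hmR,
      mul_pos (show (0:ℝ) < Λ - 2.2*m by linarith) (show (0:ℝ) < Λ by nlinarith)]
  have hφΛ : εd/(4*m) * Λ ≤ 0.55 * εd := by
    have h := mul_le_mul_of_nonneg_left hΛm hφ'pos.le
    calc εd/(4*m) * Λ ≤ εd/(4*m) * (2.2*m) := h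
      _ = 2.2 * (εd/(4*m) * (m:ℝ)) := by ring
      _ = 2.2 * (εd/4) := by rw [hcmeq]
      _ = 0.55 * εd := by ring
  have hkey' : |y t * (inner ℝ w (x t) : ℝ) - lam t * ‖x t‖^2| ≤ 1.05 * ε + 0.55 * εd :=
    le_trans hkey (by linarith)
  have hk1 := (abs_le.mp hkey').1
  have hk2 := (abs_le.mp hkey').2
  constructor
  · rw [div_le_iff₀ hNpos]
    have h2 := hpf t
    linarith
  · rw [le_div_iff₀ hNpos]
    by_contra hco
    push_neg at hco
    have h1 : y t * (inner ℝ w (x t) : ℝ) - 1 ≥ 0.65*εd + 1.1*ε + 2.2*δ := by linarith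
    have h2 : 1.1 * lam t > 1 := by
      nlinarith [hco, mul_le_mul_of_nonneg_left (hN11 t) (hlam t)]
    have h3 := hcs t
    nlinarith [mul_nonneg (hlam t)
        (show (0:ℝ) ≤ y t * (inner ℝ w (x t) : ℝ) - 1 - 2.2*δ by linarith),
      mul_pos hδpos (show (0:ℝ) < 1.1*lam t - 1 by linarith)]
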